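/- Let Kx, Ky, Kz be negative real numbers. The image of the set {(a,b,c) ∈ ℝ³ : a ≥ 0, b ≥ 0, c ≥ 0, a² + b² + c² = 1} under the linear map (a,b,c) ↦ Kx·a + Ky·b + Kz·c is exactly the closed interval [−√(Kx²+Ky²+Kz²), max(Kx, Ky, Kz)]. In particular, the damping values M(θ,φ) of the shoebox room are confined to this interval, so the image-source model never produces a single exponential decay rate even when Kx = Ky = Kz. -/

import Mathlib

open Real Set

lemma octant_path_subset (Kx Ky Kz a b c a' b' c' : ℝ)
    (ha : 0 < a) (hb : 0 < b) (hc : 0 < c) (hu : a^2 + b^2 + c^2 = 1)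
    (ha' : 0 ≤ a') (hb' : 0 ≤ b') (hc' : 0 ≤ c') (hv : a'^2 + b'^2 + c'^2 = 1) :
    Set.uIcc (Kx*a + Ky*b + Kz*c) (Kx*a' + Ky*b' + Kz*c') ⊆
      (fun p : ℝ × ℝ × ℝ => Kx * p.1 + Ky * p.2.1 + Kz * p.2.2) ''
        {p : ℝ × ℝ × ℝ | 0 ≤ p.1 ∧ 0 ≤ p.2.1 ∧ 0 ≤ p.2.2 ∧
          p.1 ^ 2 + p.2.1 ^ 2 + p.2.2 ^ 2 = 1} := by
  set x : ℝ → ℝ := fun t => (1-t)*a + t*a' with hx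
  set y : ℝ → ℝ := fun t => (1-t)*b + t*b' with hy
  set z : ℝ → ℝ := fun t => (1-t)*c + t*c' with hz
  have hspos : ∀ t ∈ Set.Icc (0:ℝ) 1, 0 < (x t)^2 + (y t)^2 + (z t)^2 := by
    intro t ht
    obtain ⟨ht0, ht1⟩ := ht
    simp only [hx, hy, hz]
    nlinarith [mul_nonneg (mul_nonneg (mul_nonneg (sub_nonneg.2 ht1) ht0) ha.le) ha',
      mul_nonneg (mul_nonneg (mul_nonneg (sub_nonneg.2 ht1) ht0) hb.le) hb',
      mul_nonneg (mul_nonneg (mul_nonneg (sub_nonneg.2 ht1) ht0) hc.le) hc',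
      sq_nonneg (1 - 2*t)]
  set g : ℝ → ℝ := fun t =>
    (Kx * x t + Ky * y t + Kz * z t) / Real.sqrt ((x t)^2 + (y t)^2 + (z t)^2) with hg
  have hcont : ContinuousOn g (Set.uIcc (0:ℝ) 1) := by
    rw [Set.uIcc_of_le (zero_le_one)]
    apply ContinuousOn.div
    · fun_prop
    · fun_prop
    · intro t ht
      exact (Real.sqrt_pos.2 (hspos t ht)).ne'
  have hIV := intermediate_value_uIcc hcont
  have hg0 : g 0 = Kx*a + Ky*b + Kz*c := by
    simp only [hg, hx, hy, hz]
    norm_num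
    rw [hu, Real.sqrt_one, div_one]
  have hg1 : g 1 = Kx*a' + Ky*b' + Kz*c' := by
    simp only [hg, hx, hy, hz]
    norm_num
    rw [hv, Real.sqrt_one, div_one]
  rw [hg0, hg1] at hIV
  refine hIV.trans ?_
  rintro _ ⟨t, ht, rfl⟩
  rw [Set.uIcc_of_le (zero_le_one)] at ht
  obtain ⟨ht0, ht1⟩ := ht
  have hxs : 0 < (x t)^2 + (y t)^2 + (z t)^2 := hspos t ⟨ht0, ht1⟩
  have hns : 0 < Real.sqrt ((x t)^2 + (y t)^2 + (z t)^2) := Real.sqrt_pos.2 hxs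
  have hxnn : 0 ≤ x t := add_nonneg (mul_nonneg (by linarith) ha.le) (mul_nonneg ht0 ha')
  have hynn : 0 ≤ y t := add_nonneg (mul_nonneg (by linarith) hb.le) (mul_nonneg ht0 hb')
  have hznn : 0 ≤ z t := add_nonneg (mul_nonneg (by linarith) hc.le) (mul_nonneg ht0 hc')
  refine ⟨(x t / Real.sqrt ((x t)^2 + (y t)^2 + (z t)^2),
          y t / Real.sqrt ((x t)^2 + (y t)^2 + (z t)^2),
          z t / Real.sqrt ((x t)^2 + (y t)^2 + (z t)^2)), ⟨?_, ?_, ?_, ?_⟩, ?_⟩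
  · exact div_nonneg hxnn hns.le
  · exact div_nonneg hynn hns.le
  · exact div_nonneg hznn hns.le
  · have hsq : Real.sqrt ((x t)^2 + (y t)^2 + (z t)^2) ^ 2 = (x t)^2 + (y t)^2 + (z t)^2 :=
      Real.sq_sqrt hxs.le
    field_simp
    rw [hsq]
  · simp only [hg]
    ring

/-- the image of the nonnegative octant of the unit sphere under
`(a,b,c) ↦ Kx·a + Ky·b + Kz·c` is exactly `[−√(Kx²+Ky²+Kz²), max(Kx,Ky,Kz)]`;
in particular all damping values `M(θ,φ)` lie in this interval. -/
theorem damping_values_range (Kx Ky Kz : ℝ) (hKx : Kx < 0) (hKy : Ky < 0) (hKz : Kz < 0) :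
    (fun p : ℝ × ℝ × ℝ => Kx * p.1 + Ky * p.2.1 + Kz * p.2.2) ''
        {p : ℝ × ℝ × ℝ | 0 ≤ p.1 ∧ 0 ≤ p.2.1 ∧ 0 ≤ p.2.2 ∧
          p.1 ^ 2 + p.2.1 ^ 2 + p.2.2 ^ 2 = 1} =
      Set.Icc (-Real.sqrt (Kx ^ 2 + Ky ^ 2 + Kz ^ 2)) (max (max Kx Ky) Kz) ∧
    ∀ θ φ : ℝ,
      Kx * |Real.cos θ * Real.sin φ| + Ky * |Real.sin θ * Real.sin φ| +
          Kz * |Real.cos φ| ∈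
        Set.Icc (-Real.sqrt (Kx ^ 2 + Ky ^ 2 + Kz ^ 2)) (max (max Kx Ky) Kz) := by
  set X : ℝ := Kx ^ 2 + Ky ^ 2 + Kz ^ 2 with hXdef
  have hXpos : 0 < X := by
    nlinarith [mul_pos (neg_pos.2 hKx) (neg_pos.2 hKx), sq_nonneg Ky, sq_nonneg Kz]
  have hsX : 0 < Real.sqrt X := Real.sqrt_pos.2 hXpos
  have hmm : Real.sqrt X * Real.sqrt X = X := Real.mul_self_sqrt hXpos.le
  -- Cauchy–Schwarz lower bound for any point of the octant sphere
  have lower : ∀ a b c : ℝ, a^2 + b^2 + c^2 = 1 →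
      -Real.sqrt X ≤ Kx*a + Ky*b + Kz*c := by
    intro a b c hn
    have h2 : (Kx*a + Ky*b + Kz*c)^2 ≤ X := by
      nlinarith [sq_nonneg (Kx*b - Ky*a), sq_nonneg (Kx*c - Kz*a), sq_nonneg (Ky*c - Kz*b)]
    have h3 := Real.sqrt_le_sqrt h2
    rw [Real.sqrt_sq_eq_abs] at h3
    linarith [neg_abs_le (Kx*a + Ky*b + Kz*c)]
  -- upper bound
  have upper : ∀ a b c : ℝ, 0 ≤ a → 0 ≤ b → 0 ≤ c → a^2 + b^2 + c^2 = 1 →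
      Kx*a + Ky*b + Kz*c ≤ max (max Kx Ky) Kz := by
    intro a b c ha hb hc hn
    set U := max (max Kx Ky) Kz with hU
    have hUx : Kx ≤ U := le_max_of_le_left (le_max_left _ _)
    have hUy : Ky ≤ U := le_max_of_le_left (le_max_right _ _)
    have hUz : Kz ≤ U := le_max_right _ _
    have hUneg : U < 0 := by
      rcases max_cases (max Kx Ky) Kz with ⟨h, _⟩ | ⟨h, _⟩
      · rw [hU, h]; rcases max_cases Kx Ky with ⟨h2, _⟩ | ⟨h2, _⟩ <;> rw [h2] <;> assumption
      · rw [hU, h]; exact hKz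
    have hsum : 1 ≤ a + b + c := by
      nlinarith [mul_nonneg ha hb, mul_nonneg ha hc, mul_nonneg hb hc,
        add_nonneg (add_nonneg ha hb) hc]
    calc Kx*a + Ky*b + Kz*c ≤ U*a + U*b + U*c := by
          gcongr
      _ = U * (a + b + c) := by ring
      _ ≤ U * 1 := by
          exact mul_le_mul_of_nonpos_left hsum hUneg.le
      _ = U := mul_one U
  -- the minimizing point
  have hua : 0 < -Kx / Real.sqrt X := div_pos (by linarith) hsX
  have hub : 0 < -Ky / Real.sqrt X := div_pos (by linarith) hsX
  have huc : 0 < -Kz / Real.sqrt X := div_pos (by linarith) hsX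
  have humem : (-Kx / Real.sqrt X)^2 + (-Ky / Real.sqrt X)^2 + (-Kz / Real.sqrt X)^2 = 1 := by
    field_simp
    rw [Real.sq_sqrt hXpos.le, hXdef]
  have hfu : Kx * (-Kx / Real.sqrt X) + Ky * (-Ky / Real.sqrt X) + Kz * (-Kz / Real.sqrt X)
      = -Real.sqrt X := by
    calc Kx * (-Kx / Real.sqrt X) + Ky * (-Ky / Real.sqrt X) + Kz * (-Kz / Real.sqrt X)
        = -(X / Real.sqrt X) := by rw [hXdef]; ring
      _ = -Real.sqrt X := by rw [Real.div_sqrt]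
  have reach : ∀ v1 v2 v3 : ℝ, 0 ≤ v1 → 0 ≤ v2 → 0 ≤ v3 → v1^2 + v2^2 + v3^2 = 1 →
      Set.Icc (-Real.sqrt X) (Kx*v1 + Ky*v2 + Kz*v3) ⊆
        (fun p : ℝ × ℝ × ℝ => Kx * p.1 + Ky * p.2.1 + Kz * p.2.2) ''
          {p : ℝ × ℝ × ℝ | 0 ≤ p.1 ∧ 0 ≤ p.2.1 ∧ 0 ≤ p.2.2 ∧
            p.1 ^ 2 + p.2.1 ^ 2 + p.2.2 ^ 2 = 1} := by
    intro v1 v2 v3 h1 h2 h3 hvn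
    have hpath := octant_path_subset Kx Ky Kz _ _ _ v1 v2 v3 hua hub huc humem h1 h2 h3 hvn
    rw [hfu] at hpath
    refine subset_trans ?_ hpath
    rw [Set.uIcc_of_le (lower v1 v2 v3 hvn)]
  have himg : (fun p : ℝ × ℝ × ℝ => Kx * p.1 + Ky * p.2.1 + Kz * p.2.2) ''
        {p : ℝ × ℝ × ℝ | 0 ≤ p.1 ∧ 0 ≤ p.2.1 ∧ 0 ≤ p.2.2 ∧
          p.1 ^ 2 + p.2.1 ^ 2 + p.2.2 ^ 2 = 1} =
      Set.Icc (-Real.sqrt X) (max (max Kx Ky) Kz) := by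
    apply Set.Subset.antisymm
    · rintro _ ⟨⟨a, b, c⟩, ⟨ha, hb, hc, hn⟩, rfl⟩
      exact ⟨lower a b c hn, upper a b c ha hb hc hn⟩
    · intro w hw
      rcases max_choice (max Kx Ky) Kz with h | h
      · rcases max_choice Kx Ky with h2 | h2
        · refine reach 1 0 0 zero_le_one le_rfl le_rfl (by norm_num) ⟨hw.1, ?_⟩
          have := hw.2
          rw [h, h2] at this
          linarith
        · refine reach 0 1 0 le_rfl zero_le_one le_rfl (by norm_num) ⟨hw.1, ?_⟩
          have := hw.2
          rw [h, h2] at this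
          linarith
      · refine reach 0 0 1 le_rfl le_rfl zero_le_one (by norm_num) ⟨hw.1, ?_⟩
        have := hw.2
        rw [h] at this
        linarith
  refine ⟨himg, fun θ φ => ?_⟩
  rw [← himg]
  refine ⟨(|Real.cos θ * Real.sin φ|, |Real.sin θ * Real.sin φ|, |Real.cos φ|),
    ⟨abs_nonneg _, abs_nonneg _, abs_nonneg _, ?_⟩, rfl⟩
  rw [sq_abs, sq_abs, sq_abs]
  linear_combination Real.sin φ ^ 2 * Real.sin_sq_add_cos_sq θ + Real.sin_sq_add_cos_sq φ
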